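/- For all real numbers x1, x2, x3 with (x1, x2, x3) ≠ (0, 0, 0), the strict inequality (x1 + x2 - x3)^4 + 6(x1^2 x2^2 + x1^2 x3^2 + x2^2 x3^2) > 8(x1 x2^3 - x1 x3^3 - x2^3 x3) + 24 x1 x2 x3^2 holds (this is the inequality of Corollary 3.2(ii) with x1^3 x2 and x1 x2^3, x1^3 x3 and x1 x3^3, x2 x3^3 and x2^3 x3 simultaneously exchanged). -/
import Mathlib


/-- **Corollary 3.2(ii), exchanged version.** -/
theorem stmt_15 (x1 x2 x3 : ℝ) (h : (x1, x2, x3) ≠ (0, 0, 0)) :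
    8 * (x1 * x2^3 - x1 * x3^3 - x2^3 * x3) + 24 * x1 * x2 * x3^2
      < (x1 + x2 - x3)^4 + 6 * (x1^2 * x2^2 + x1^2 * x3^2 + x2^2 * x3^2) := by
  have hs : 0 < x1^2 + x2^2 + x3^2 := by
    rcases lt_or_eq_of_le (by positivity : (0:ℝ) ≤ x1^2 + x2^2 + x3^2) with h' | h'
    · exact h'
    · exfalso
      have h1 : x1 = 0 := by nlinarith [sq_nonneg x1, sq_nonneg x2, sq_nonneg x3, sq_abs x1]
      have h2 : x2 = 0 := by nlinarith [sq_nonneg x1, sq_nonneg x2, sq_nonneg x3]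
      have h3 : x3 = 0 := by nlinarith [sq_nonneg x1, sq_nonneg x2, sq_nonneg x3]
      exact h (by simp [h1, h2, h3])
  nlinarith [mul_pos hs hs,
    sq_nonneg (7*x1^2 - 2*x2^2 - 2*x3^2 + 16*x1*x2 - 16*x1*x3 - 8*x2*x3),
    sq_nonneg (45*x2^2 - 4*x3^2 - 80*x1*x2 - 88*x1*x3 + 96*x2*x3),
    sq_nonneg (287*x3^2 - 200*x1*x2 + 464*x1*x3 - 768*x2*x3),
    sq_nonneg (5455*x1*x2 - 2668*x1*x3 - 1324*x2*x3),
    sq_nonneg (30223*x1*x3 - 22876*x2*x3),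
    sq_nonneg (x2*x3)]
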